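/- arXiv:0902.0582 — 7 statements merged into one kernel-verified Lean document; each statement's English description precedes it below -/
import Mathlib

section
/- Let Z_0 and Z_1 be real-valued random variables. Suppose there exist positive constants σ_0, σ_1, c_0, c_1 such that for i = 0, 1 and any t in [0, 1/c_i), log E[exp(t Z_i)] ≤ (σ_i t)² / (1 − c_i t). Then for any t in [0, 1/(c_0 + c_1)), log E[exp(t (Z_0 + Z_1))] ≤ ((σ_0 + σ_1) t)² / (1 − (c_0 + c_1) t). -/
open MeasureTheory Real

lemma aux_memLp {Ω : Type*} [MeasurableSpace Ω] {μ : Measure Ω}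
    (Z : Ω → ℝ) {t p : ℝ} (hp : 1 < p)
    (hm : AEStronglyMeasurable (fun ω => exp (t * Z ω)) μ)
    (h : Integrable (fun ω => exp (p * t * Z ω)) μ) :
    MemLp (fun ω => exp (t * Z ω)) (ENNReal.ofReal p) μ := by
  have hp0 : (0:ℝ) < p := by linarith
  have hne0 : ENNReal.ofReal p ≠ 0 := by simp [ENNReal.ofReal_eq_zero, not_le, hp0]
  have hnetop : ENNReal.ofReal p ≠ ⊤ := ENNReal.ofReal_ne_top
  have hdiv : ENNReal.ofReal p / ENNReal.ofReal p = 1 := ENNReal.div_self hne0 hnetop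
  have key : MemLp (fun ω => ‖exp (t * Z ω)‖ ^ (ENNReal.ofReal p).toReal)
      (ENNReal.ofReal p / ENNReal.ofReal p) μ := by
    rw [hdiv, memLp_one_iff_integrable, ENNReal.toReal_ofReal hp0.le]
    have : (fun ω => ‖exp (t * Z ω)‖ ^ p) = fun ω => exp (p * t * Z ω) := by
      funext ω
      rw [Real.norm_of_nonneg (exp_pos _).le, ← Real.exp_mul, mul_comm (t * Z ω) p, mul_assoc]
    rw [this]; exact h
  exact (memLp_norm_rpow_iff hm hne0 hnetop).mp key

theorem stmt0 {Ω : Type*} [MeasurableSpace Ω] {μ : Measure Ω} [IsProbabilityMeasure μ]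
    (Z₀ Z₁ : Ω → ℝ) (σ₀ σ₁ c₀ c₁ : ℝ)
    (hσ₀ : 0 < σ₀) (hσ₁ : 0 < σ₁) (hc₀ : 0 < c₀) (hc₁ : 0 < c₁)
    (hint₀ : ∀ t : ℝ, 0 ≤ t → t < 1 / c₀ → Integrable (fun ω => exp (t * Z₀ ω)) μ)
    (hint₁ : ∀ t : ℝ, 0 ≤ t → t < 1 / c₁ → Integrable (fun ω => exp (t * Z₁ ω)) μ)
    (h₀ : ∀ t : ℝ, 0 ≤ t → t < 1 / c₀ →
      Real.log (∫ ω, exp (t * Z₀ ω) ∂μ) ≤ (σ₀ * t) ^ 2 / (1 - c₀ * t))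
    (h₁ : ∀ t : ℝ, 0 ≤ t → t < 1 / c₁ →
      Real.log (∫ ω, exp (t * Z₁ ω) ∂μ) ≤ (σ₁ * t) ^ 2 / (1 - c₁ * t)) :
    ∀ t : ℝ, 0 ≤ t → t < 1 / (c₀ + c₁) →
      Real.log (∫ ω, exp (t * (Z₀ ω + Z₁ ω)) ∂μ) ≤
        ((σ₀ + σ₁) * t) ^ 2 / (1 - (c₀ + c₁) * t) := by
  intro t ht htlt
  have hcs : 0 < c₀ + c₁ := by positivity
  have hσs : 0 < σ₀ + σ₁ := by positivity
  have hD : 0 < 1 - (c₀ + c₁) * t := by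
    have := (lt_div_iff₀ hcs).mp htlt
    linarith [mul_comm t (c₀ + c₁)]
  -- nonnegativity of RHS
  have hRHS : 0 ≤ ((σ₀ + σ₁) * t) ^ 2 / (1 - (c₀ + c₁) * t) := by positivity
  rcases eq_or_lt_of_le ht with h0 | h0
  · simp [← h0]
  -- main case 0 < t
  set D := 1 - (c₀ + c₁) * t with hDdef
  set x := σ₀ * D / (σ₀ + σ₁) with hxdef
  set y := σ₁ * D / (σ₀ + σ₁) with hydef
  have hx0 : 0 < x := by positivity
  have hy0 : 0 < y := by positivity
  have hxy : x + y = D := by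
    rw [hxdef, hydef]; field_simp
  set α := c₀ * t + x with hαdef
  have hα0 : 0 < α := by positivity
  have hα1 : α < 1 := by nlinarith [mul_pos hc₁ h0]
  set p := α⁻¹ with hpdef
  set q := (1 - α)⁻¹ with hqdef
  clear_value D x y α
  have hp1 : 1 < p := by
    rw [hpdef]; exact (one_lt_inv₀ hα0).mpr hα1
  have hq1 : 1 < q := by
    rw [hqdef]
    apply (one_lt_inv₀ (by linarith)).mpr (by linarith)
  have hpq : p.HolderConjugate q := by
    rw [Real.holderConjugate_iff]
    constructor
    · exact hp1
    · rw [hpdef, hqdef, inv_inv, inv_inv]; ring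
  have hpt0 : 0 ≤ p * t := by positivity
  have hqt0 : 0 ≤ q * t := by positivity
  have hpt : p * t < 1 / c₀ := by
    rw [hpdef, lt_div_iff₀ hc₀]
    rw [show α⁻¹ * t * c₀ = (t * c₀) / α by field_simp]
    rw [div_lt_one hα0, hαdef]
    nlinarith
  have hqt : q * t < 1 / c₁ := by
    rw [hqdef, lt_div_iff₀ hc₁]
    rw [show (1 - α)⁻¹ * t * c₁ = (t * c₁) / (1 - α) by field_simp]
    rw [div_lt_one (by linarith), hαdef]
    nlinarith
  have ht0' : t < 1 / c₀ := lt_of_lt_of_le htlt (by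
    apply one_div_le_one_div_of_le hc₀; linarith)
  have ht1' : t < 1 / c₁ := lt_of_lt_of_le htlt (by
    apply one_div_le_one_div_of_le hc₁; linarith)
  -- MemLp facts
  have hm0 : AEStronglyMeasurable (fun ω => exp (t * Z₀ ω)) μ :=
    (hint₀ t ht ht0').aestronglyMeasurable
  have hm1 : AEStronglyMeasurable (fun ω => exp (t * Z₁ ω)) μ :=
    (hint₁ t ht ht1').aestronglyMeasurable
  have hip : Integrable (fun ω => exp (p * t * Z₀ ω)) μ := hint₀ (p * t) hpt0 hpt
  have hiq : Integrable (fun ω => exp (q * t * Z₁ ω)) μ := hint₁ (q * t) hqt0 hqt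
  have hmem0 : MemLp (fun ω => exp (t * Z₀ ω)) (ENNReal.ofReal p) μ :=
    aux_memLp Z₀ hp1 hm0 hip
  have hmem1 : MemLp (fun ω => exp (t * Z₁ ω)) (ENNReal.ofReal q) μ :=
    aux_memLp Z₁ hq1 hm1 hiq
  -- Hölder
  have hHolder := integral_mul_le_Lp_mul_Lq_of_nonneg hpq
    (Filter.Eventually.of_forall (fun ω => (exp_pos _).le))
    (Filter.Eventually.of_forall (fun ω => (exp_pos _).le)) hmem0 hmem1
  -- rewrite powers inside Hölder
  have hA : ∫ ω, exp (t * Z₀ ω) ^ p ∂μ = ∫ ω, exp (p * t * Z₀ ω) ∂μ := by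
    apply integral_congr_ae
    filter_upwards with ω
    rw [← Real.exp_mul, mul_comm (t * Z₀ ω) p, mul_assoc]
  have hB : ∫ ω, exp (t * Z₁ ω) ^ q ∂μ = ∫ ω, exp (q * t * Z₁ ω) ∂μ := by
    apply integral_congr_ae
    filter_upwards with ω
    rw [← Real.exp_mul, mul_comm (t * Z₁ ω) q, mul_assoc]
  rw [hA, hB] at hHolder
  set A := ∫ ω, exp (p * t * Z₀ ω) ∂μ with hAdef
  set B := ∫ ω, exp (q * t * Z₁ ω) ∂μ with hBdef
  have hApos : 0 < A := integral_exp_pos hip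
  have hBpos : 0 < B := integral_exp_pos hiq
  have hprod : (fun ω => exp (t * (Z₀ ω + Z₁ ω))) =
      fun ω => exp (t * Z₀ ω) * exp (t * Z₁ ω) := by
    funext ω; rw [← Real.exp_add]; ring_nf
  set I := ∫ ω, exp (t * (Z₀ ω + Z₁ ω)) ∂μ with hIdef
  have hIle : I ≤ A ^ (1/p) * B ^ (1/q) := by
    rw [hIdef, hprod]; exact hHolder
  rcases le_or_gt I 1 with hI1 | hI1
  · exact le_trans (Real.log_nonpos (integral_nonneg fun ω => (exp_pos _).le) hI1) hRHS
  have hIpos : 0 < I := by linarith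
  have hlog : Real.log I ≤ (1/p) * Real.log A + (1/q) * Real.log B := by
    calc Real.log I ≤ Real.log (A ^ (1/p) * B ^ (1/q)) := Real.log_le_log hIpos hIle
      _ = (1/p) * Real.log A + (1/q) * Real.log B := by
          rw [Real.log_mul (by positivity) (by positivity),
            Real.log_rpow hApos, Real.log_rpow hBpos]
  have hbound : (1/p) * Real.log A + (1/q) * Real.log B ≤
      (1/p) * ((σ₀ * (p * t)) ^ 2 / (1 - c₀ * (p * t))) +
      (1/q) * ((σ₁ * (q * t)) ^ 2 / (1 - c₁ * (q * t))) := by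
    have b0 := h₀ (p * t) hpt0 hpt
    have b1 := h₁ (q * t) hqt0 hqt
    have hp0 : (0:ℝ) ≤ 1/p := by positivity
    have hq0 : (0:ℝ) ≤ 1/q := by positivity
    exact add_le_add (mul_le_mul_of_nonneg_left b0 hp0) (mul_le_mul_of_nonneg_left b1 hq0)
  have e₀ : 1 - c₀ * (p * t) = x * p := by
    rw [hpdef]
    field_simp
    linarith [hαdef]
  have h1α : 1 - α - c₁ * t = y := by
    rw [hαdef]
    have : D = 1 - (c₀ + c₁) * t := hDdef
    linarith [hxy]
  have e₁ : 1 - c₁ * (q * t) = y * q := by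
    rw [hqdef]
    have h1a : (0:ℝ) < 1 - α := by linarith
    field_simp
    linarith [h1α]
  have hfinal : (1/p) * ((σ₀ * (p * t)) ^ 2 / (1 - c₀ * (p * t))) +
      (1/q) * ((σ₁ * (q * t)) ^ 2 / (1 - c₁ * (q * t))) = ((σ₀ + σ₁) * t) ^ 2 / D := by
    rw [e₀, e₁]
    have hpne : p ≠ 0 := by positivity
    have hqne : q ≠ 0 := by positivity
    have t1 : (1/p) * ((σ₀ * (p * t)) ^ 2 / (x * p)) = σ₀ ^ 2 * t ^ 2 / x := by
      field_simp
    have t2 : (1/q) * ((σ₁ * (q * t)) ^ 2 / (y * q)) = σ₁ ^ 2 * t ^ 2 / y := by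
      field_simp
    rw [t1, t2, hxdef, hydef]
    field_simp
  calc Real.log I ≤ (1/p) * Real.log A + (1/q) * Real.log B := hlog
    _ ≤ _ := hbound
    _ = ((σ₀ + σ₁) * t) ^ 2 / D := hfinal
end

section
/- Let Z_0, Z_1, …, Z_n be real-valued random variables. Assume there exist positive constants σ_0, …, σ_n and c_0, …, c_n such that for each i and any t in [0, 1/c_i), log E[exp(t Z_i)] ≤ (σ_i t)² / (1 − c_i t). Then, setting σ = σ_0 + ⋯ + σ_n and C = c_0 + ⋯ + c_n, for any t in [0, 1/C), log E[exp(t (Z_0 + ⋯ + Z_n))] ≤ (σ t)² / (1 − C t). -/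
open MeasureTheory Real Finset

theorem stmt1 {Ω : Type*} [MeasurableSpace Ω] {μ : Measure Ω} [IsProbabilityMeasure μ]
    (n : ℕ) (Z : ℕ → Ω → ℝ) (σ c : ℕ → ℝ)
    (hσ : ∀ i ≤ n, 0 < σ i) (hc : ∀ i ≤ n, 0 < c i)
    (hint : ∀ i ≤ n, ∀ t : ℝ, 0 ≤ t → t < 1 / c i →
      Integrable (fun ω => exp (t * Z i ω)) μ)
    (h : ∀ i ≤ n, ∀ t : ℝ, 0 ≤ t → t < 1 / c i →
      Real.log (∫ ω, exp (t * Z i ω) ∂μ) ≤ (σ i * t) ^ 2 / (1 - c i * t)) :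
    ∀ t : ℝ, 0 ≤ t → t < 1 / (∑ i ∈ range (n + 1), c i) →
      Real.log (∫ ω, exp (t * ∑ i ∈ range (n + 1), Z i ω) ∂μ) ≤
        ((∑ i ∈ range (n + 1), σ i) * t) ^ 2 / (1 - (∑ i ∈ range (n + 1), c i) * t) := by
  intro t ht htC
  set S := ∑ i ∈ range (n + 1), σ i with hSdef
  set C := ∑ i ∈ range (n + 1), c i with hCdef
  have hS : 0 < S := Finset.sum_pos (fun i hi => hσ i (Nat.lt_succ_iff.mp (mem_range.mp hi)))
    ⟨0, mem_range.mpr n.succ_pos⟩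
  have hC : 0 < C := Finset.sum_pos (fun i hi => hc i (Nat.lt_succ_iff.mp (mem_range.mp hi)))
    ⟨0, mem_range.mpr n.succ_pos⟩
  have hCt : 0 < 1 - C * t := by
    have : C * t < 1 := by
      rw [lt_div_iff₀ hC] at htC; linarith [htC]
    linarith
  rcases eq_or_lt_of_le ht with rfl | htpos
  · simp
  -- t > 0
  set a : ℕ → ℝ := fun i => c i * t + σ i / S * (1 - C * t) with hadef
  have ha_pos : ∀ i ∈ range (n + 1), 0 < a i := by
    intro i hi
    have hci := hc i (Nat.lt_succ_iff.mp (mem_range.mp hi))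
    have hσi := hσ i (Nat.lt_succ_iff.mp (mem_range.mp hi))
    have : 0 < σ i / S * (1 - C * t) := by positivity
    have : 0 < c i * t := by positivity
    simp only [hadef]; linarith
  have ha_sum : ∑ i ∈ range (n + 1), a i = 1 := by
    have h1 : ∑ i ∈ range (n + 1), σ i / S * (1 - C * t) = 1 - C * t := by
      rw [← sum_mul, ← sum_div, ← hSdef, div_self hS.ne', one_mul]
    simp only [hadef]
    rw [sum_add_distrib, ← sum_mul, ← hCdef, h1]
    ring
  set s : ℕ → ℝ := fun i => t / a i with hsdef
  have hs_nonneg : ∀ i ∈ range (n + 1), 0 ≤ s i := fun i hi =>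
    div_nonneg ht (ha_pos i hi).le
  have hs_lt : ∀ i ∈ range (n + 1), s i < 1 / c i := by
    intro i hi
    have hci := hc i (Nat.lt_succ_iff.mp (mem_range.mp hi))
    have hσi := hσ i (Nat.lt_succ_iff.mp (mem_range.mp hi))
    rw [hsdef, div_lt_div_iff₀ (ha_pos i hi) hci]
    have : 0 < σ i / S * (1 - C * t) := by positivity
    simp only [hadef]; nlinarith [this]
  have hint' : ∀ i ∈ range (n + 1), Integrable (fun ω => exp (s i * Z i ω)) μ := fun i hi =>
    hint i (Nat.lt_succ_iff.mp (mem_range.mp hi)) (s i) (hs_nonneg i hi) (hs_lt i hi)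
  have hIpos : ∀ i ∈ range (n + 1), 0 < ∫ ω, exp (s i * Z i ω) ∂μ := fun i hi =>
    integral_exp_pos (hint' i hi)
  -- Hölder
  set P : ℝ := ∏ i ∈ range (n + 1), (∫ ω, exp (s i * Z i ω) ∂μ) ^ (a i) with hPdef
  have hPpos : 0 < P :=
    Finset.prod_pos (fun i hi => Real.rpow_pos_of_pos (hIpos i hi) _)
  have hkey : (∫ ω, exp (t * ∑ i ∈ range (n + 1), Z i ω) ∂μ) ≤ P := by
    have hf : ∀ i ∈ range (n + 1),
        AEMeasurable (fun ω => ENNReal.ofReal (exp (s i * Z i ω))) μ := fun i hi =>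
      ENNReal.measurable_ofReal.comp_aemeasurable (hint' i hi).aestronglyMeasurable.aemeasurable
    have H := ENNReal.lintegral_prod_norm_pow_le (μ := μ) (range (n + 1)) hf ha_sum
      (fun i hi => (ha_pos i hi).le)
    have hpt : ∀ i ∈ range (n + 1), ∀ ω,
        (ENNReal.ofReal (exp (s i * Z i ω))) ^ (a i) = ENNReal.ofReal (exp (t * Z i ω)) := by
      intro i hi ω
      rw [ENNReal.ofReal_rpow_of_pos (exp_pos _), Real.rpow_def_of_pos (exp_pos _),
        Real.log_exp]
      have hai := (ha_pos i hi).ne'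
      congr 1
      rw [hsdef]
      field_simp
    have hL : ∀ ω, ∏ i ∈ range (n + 1),
        (ENNReal.ofReal (exp (s i * Z i ω))) ^ (a i)
        = ENNReal.ofReal (exp (t * ∑ i ∈ range (n + 1), Z i ω)) := by
      intro ω
      rw [Finset.prod_congr rfl (fun i hi => hpt i hi ω), mul_sum, exp_sum,
        ← ENNReal.ofReal_prod_of_nonneg]
      intro i _; exact (exp_pos _).le
    have hR : ∀ i ∈ range (n + 1),
        (∫⁻ ω, ENNReal.ofReal (exp (s i * Z i ω)) ∂μ) ^ (a i)
        = ENNReal.ofReal ((∫ ω, exp (s i * Z i ω) ∂μ) ^ (a i)) := by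
      intro i hi
      rw [← ofReal_integral_eq_lintegral_ofReal (hint' i hi)
        (Filter.Eventually.of_forall fun ω => (exp_pos _).le),
        ENNReal.ofReal_rpow_of_pos (hIpos i hi)]
    have H2 : (∫⁻ ω, ENNReal.ofReal (exp (t * ∑ i ∈ range (n + 1), Z i ω)) ∂μ)
        ≤ ENNReal.ofReal P := by
      calc (∫⁻ ω, ENNReal.ofReal (exp (t * ∑ i ∈ range (n + 1), Z i ω)) ∂μ)
          = ∫⁻ ω, ∏ i ∈ range (n + 1), (ENNReal.ofReal (exp (s i * Z i ω))) ^ (a i) ∂μ := by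
            simp_rw [hL]
        _ ≤ ∏ i ∈ range (n + 1), (∫⁻ ω, ENNReal.ofReal (exp (s i * Z i ω)) ∂μ) ^ (a i) := H
        _ = ENNReal.ofReal P := by
            rw [Finset.prod_congr rfl hR, ← ENNReal.ofReal_prod_of_nonneg
              (fun i hi => (Real.rpow_pos_of_pos (hIpos i hi) _).le)]
    by_cases hI : Integrable (fun ω => exp (t * ∑ i ∈ range (n + 1), Z i ω)) μ
    · rw [← ofReal_integral_eq_lintegral_ofReal hI
        (Filter.Eventually.of_forall fun ω => (exp_pos _).le)] at H2
      exact (ENNReal.ofReal_le_ofReal_iff hPpos.le).mp H2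
    · rw [integral_undef hI]; exact hPpos.le
  -- take logs
  have hRHSnn : 0 ≤ (S * t) ^ 2 / (1 - C * t) := by positivity
  rcases le_or_gt (∫ ω, exp (t * ∑ i ∈ range (n + 1), Z i ω) ∂μ) 0 with hle | hpos
  · have h0 : (∫ ω, exp (t * ∑ i ∈ range (n + 1), Z i ω) ∂μ) = 0 :=
      le_antisymm hle (integral_nonneg fun ω => (exp_pos _).le)
    rw [h0, Real.log_zero]
    exact hRHSnn
  · have hlog : Real.log (∫ ω, exp (t * ∑ i ∈ range (n + 1), Z i ω) ∂μ) ≤ Real.log P :=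
      Real.log_le_log hpos hkey
    have hlogP : Real.log P = ∑ i ∈ range (n + 1), a i * Real.log (∫ ω, exp (s i * Z i ω) ∂μ) := by
      rw [hPdef, Real.log_prod (fun i hi => (Real.rpow_pos_of_pos (hIpos i hi) _).ne')]
      exact Finset.sum_congr rfl fun i hi => Real.log_rpow (hIpos i hi) _
    have hbound : ∑ i ∈ range (n + 1), a i * Real.log (∫ ω, exp (s i * Z i ω) ∂μ)
        ≤ ∑ i ∈ range (n + 1), a i * ((σ i * s i) ^ 2 / (1 - c i * s i)) := by
      apply Finset.sum_le_sum
      intro i hi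
      exact mul_le_mul_of_nonneg_left
        (h i (Nat.lt_succ_iff.mp (mem_range.mp hi)) (s i) (hs_nonneg i hi) (hs_lt i hi))
        (ha_pos i hi).le
    have halg : ∑ i ∈ range (n + 1), a i * ((σ i * s i) ^ 2 / (1 - c i * s i))
        = (S * t) ^ 2 / (1 - C * t) := by
      have : ∀ i ∈ range (n + 1), a i * ((σ i * s i) ^ 2 / (1 - c i * s i))
          = σ i * (S * t ^ 2 / (1 - C * t)) := by
        intro i hi
        have hci := hc i (Nat.lt_succ_iff.mp (mem_range.mp hi))
        have hσi := hσ i (Nat.lt_succ_iff.mp (mem_range.mp hi))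
        have hai := ha_pos i hi
        have hdiff : a i - c i * t = σ i / S * (1 - C * t) := by simp only [hadef]; ring
        have hdiffpos : 0 < a i - c i * t := by rw [hdiff]; positivity
        have hai := (ha_pos i hi).ne'
        have hSne := hS.ne'
        have hCtne := hCt.ne'
        have hσine := hσi.ne'
        rw [hsdef]
        rw [show (1 : ℝ) - c i * (t / a i) = (σ i / S * (1 - C * t)) / a i by
          rw [← hdiff]; field_simp]
        field_simp
      rw [Finset.sum_congr rfl this, ← sum_mul, ← hSdef]
      rw [mul_pow]
      ring
    linarith [hlog, hlogP, hbound, halg]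
end

section
/- Suppose real random variables X_1, …, X_n satisfy log E[exp(t X_i)] ≤ σ_i² t² / (2(1 − t M)) for all t in [0, 1/M), where σ_i > 0 and M > 0. Set V_n = σ_1² + ⋯ + σ_n² and S_n = X_1 + ⋯ + X_n. Then for any x > 0, P(S_n ≥ √(2 V_n x) + M x) ≤ exp(−x). -/
open MeasureTheory Real Finset

theorem stmt2 {Ω : Type*} [MeasurableSpace Ω] {μ : Measure Ω} [IsProbabilityMeasure μ]
    (n : ℕ) (X : ℕ → Ω → ℝ) (σ : ℕ → ℝ) (M : ℝ) (hM : 0 < M)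
    (hσ : ∀ i, 0 < σ i) (hmeas : ∀ i, Measurable (X i))
    (hindep : ProbabilityTheory.iIndepFun X μ)
    (hint : ∀ i, ∀ t : ℝ, 0 ≤ t → t < 1 / M → Integrable (fun ω => exp (t * X i ω)) μ)
    (hlap : ∀ i, ∀ t : ℝ, 0 ≤ t → t < 1 / M →
      Real.log (∫ ω, exp (t * X i ω) ∂μ) ≤ σ i ^ 2 * t ^ 2 / (2 * (1 - t * M))) :
    ∀ x : ℝ, 0 < x →
      μ {ω | Real.sqrt (2 * (∑ i ∈ range n, σ i ^ 2) * x) + M * x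
              ≤ ∑ i ∈ range n, X i ω}
        ≤ ENNReal.ofReal (exp (-x)) := by
  intro x hx
  rcases Nat.eq_zero_or_pos n with hn | hn
  · subst hn
    have : {ω | Real.sqrt (2 * (∑ i ∈ range 0, σ i ^ 2) * x) + M * x
            ≤ ∑ i ∈ range 0, X i ω} = ∅ := by
      ext ω
      simp only [range_zero, sum_empty, Set.mem_setOf_eq, Set.mem_empty_iff_false,
        iff_false, not_le, mul_zero, zero_mul, Real.sqrt_zero, zero_add]
      positivity
    rw [this]
    simp
  -- main case
  set V : ℝ := ∑ i ∈ range n, σ i ^ 2 with hV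
  have hVpos : 0 < V := by
    apply Finset.sum_pos (fun i _ => pow_pos (hσ i) 2)
    exact ⟨0, mem_range.mpr hn⟩
  set s : ℝ := Real.sqrt (2 * x / V) with hs
  have hspos : 0 < s := Real.sqrt_pos.mpr (by positivity)
  have hs2 : s ^ 2 = 2 * x / V := Real.sq_sqrt (by positivity)
  set d : ℝ := 1 + M * s with hd
  have hdpos : 0 < d := by positivity
  set t : ℝ := s / d with ht
  have htpos : 0 < t := by positivity
  have htlt : t < 1 / M := by
    rw [div_lt_div_iff₀ hdpos hM]
    nlinarith
  have hsqrt : Real.sqrt (2 * V * x) = V * s := by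
    have h1 : 2 * V * x = (V * s) ^ 2 := by
      rw [mul_pow, hs2]; field_simp
    rw [h1, Real.sqrt_sq (by positivity)]
  set a : ℝ := Real.sqrt (2 * V * x) + M * x with ha
  have hint' : ∀ i ∈ range n, Integrable (fun ω => exp (t * X i ω)) μ :=
    fun i _ => hint i t htpos.le htlt
  have hintS : Integrable (fun ω => exp (t * (∑ i ∈ range n, X i) ω)) μ :=
    hindep.integrable_exp_mul_sum hmeas hint'
  have hcher := ProbabilityTheory.measure_ge_le_exp_mul_mgf (X := ∑ i ∈ range n, X i)
    (μ := μ) a htpos.le hintS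
  have hmgf : ProbabilityTheory.mgf (∑ i ∈ range n, X i) μ t
      ≤ exp (V * t ^ 2 / (2 * (1 - t * M))) := by
    rw [hindep.mgf_sum hmeas]
    have hVt : V * t ^ 2 / (2 * (1 - t * M))
        = ∑ i ∈ range n, σ i ^ 2 * t ^ 2 / (2 * (1 - t * M)) := by
      rw [hV, Finset.sum_mul, Finset.sum_div]
    rw [hVt, Real.exp_sum]
    apply Finset.prod_le_prod (fun i _ => (ProbabilityTheory.mgf_pos (hint i t htpos.le htlt)).le)
    intro i _
    have hpos := ProbabilityTheory.mgf_pos (μ := μ) (hint i t htpos.le htlt)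
    have := hlap i t htpos.le htlt
    calc ProbabilityTheory.mgf (X i) μ t
        = exp (Real.log (ProbabilityTheory.mgf (X i) μ t)) := (Real.exp_log hpos).symm
      _ ≤ exp (σ i ^ 2 * t ^ 2 / (2 * (1 - t * M))) := Real.exp_le_exp.mpr this
  have hkey : -t * a + V * t ^ 2 / (2 * (1 - t * M)) = -x := by
    have h1tM : 1 - t * M = 1 / d := by
      rw [ht]; field_simp [hd]; ring
    rw [ha, hsqrt, h1tM, ht]
    have hVs2 : V * s ^ 2 = 2 * x := by rw [hs2]; field_simp
    field_simp
    linear_combination (-(d^2) + 2*s*M + s^2*M^2) * hVs2 + 2*x*d^2 * hd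
  have hfinal : (μ {ω | a ≤ (∑ i ∈ range n, X i) ω}).toReal ≤ exp (-x) := by
    calc (μ {ω | a ≤ (∑ i ∈ range n, X i) ω}).toReal
        ≤ exp (-t * a) * ProbabilityTheory.mgf (∑ i ∈ range n, X i) μ t := hcher
      _ ≤ exp (-t * a) * exp (V * t ^ 2 / (2 * (1 - t * M))) := by
          gcongr
      _ = exp (-x) := by rw [← Real.exp_add, hkey]
  have hset : {ω | Real.sqrt (2 * V * x) + M * x ≤ ∑ i ∈ range n, X i ω}
      = {ω | a ≤ (∑ i ∈ range n, X i) ω} := by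
    ext ω; simp [ha, Finset.sum_apply]
  rw [hset]
  have hne : μ {ω | a ≤ (∑ i ∈ range n, X i) ω} ≠ ⊤ := measure_ne_top _ _
  rw [← ENNReal.ofReal_toReal hne]
  exact ENNReal.ofReal_le_ofReal hfinal
end

section
/- Let X_1, …, X_n be independent centered real random variables each bounded in absolute value by M. Set V_n = Var(X_1) + ⋯ + Var(X_n) and S_n = X_1 + ⋯ + X_n. Then for any y > 0, P(S_n ≥ y) ≤ exp(−y² / (2 V_n + 2 y M)). -/
open MeasureTheory ProbabilityTheory Real Finset


lemma exp_tsum' (u : ℝ) : Real.exp u = ∑' n : ℕ, u ^ n / (Nat.factorial n : ℝ) := by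
  rw [Real.exp_eq_exp_ℝ, NormedSpace.exp_eq_tsum_div]

lemma pointwise_bound' {u c : ℝ} (huc : |u| ≤ c) (hc : c < 1) :
    Real.exp u ≤ 1 + u + u ^ 2 / (2 * (1 - c)) := by
  have hc0 : 0 ≤ c := le_trans (abs_nonneg u) huc
  have hsum : Summable (fun n : ℕ => u ^ n / (Nat.factorial n : ℝ)) :=
    Real.summable_pow_div_factorial u
  have hsplit := (Summable.sum_add_tsum_nat_add 2 hsum).symm
  rw [exp_tsum']
  rw [hsplit]
  have h1 : ∑ i ∈ Finset.range 2, u ^ i / (Nat.factorial i : ℝ) = 1 + u := by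
    simp [Finset.sum_range_succ]
  rw [h1]
  have hgeo : Summable (fun n : ℕ => u ^ 2 / 2 * c ^ n) :=
    (summable_geometric_of_lt_one hc0 hc).mul_left _
  have hterm : ∀ n : ℕ, u ^ (n + 2) / (Nat.factorial (n+2) : ℝ) ≤ u ^ 2 / 2 * c ^ n := by
    intro n
    have h2 : (2 : ℝ) ≤ (Nat.factorial (n+2) : ℝ) := by
      exact_mod_cast Nat.succ_le_of_lt (Nat.one_lt_factorial.mpr (by omega))
    have h3 : |u| ^ (n + 2) ≤ u ^ 2 * c ^ n := by
      calc |u| ^ (n + 2) = |u| ^ 2 * |u| ^ n := by ring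
        _ ≤ u ^ 2 * c ^ n := by
            rw [sq_abs]
            exact mul_le_mul_of_nonneg_left (pow_le_pow_left₀ (abs_nonneg u) huc n) (sq_nonneg u)
    calc u ^ (n + 2) / (Nat.factorial (n+2) : ℝ)
        ≤ |u| ^ (n + 2) / (Nat.factorial (n+2) : ℝ) := by
          apply div_le_div_of_nonneg_right ?_ ?_ |>.trans_eq rfl
          · exact (le_abs_self _).trans (le_of_eq (abs_pow u (n+2)))
          · positivity
      _ ≤ (u ^ 2 * c ^ n) / 2 := div_le_div₀ (by positivity) h3 (by norm_num) h2
      _ = u ^ 2 / 2 * c ^ n := by ring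
  calc (1 + u) + ∑' n : ℕ, u ^ (n + 2) / (Nat.factorial (n+2) : ℝ)
      ≤ (1 + u) + ∑' n : ℕ, u ^ 2 / 2 * c ^ n := by
        apply add_le_add_right
        exact Summable.tsum_le_tsum hterm ((summable_nat_add_iff 2).mpr hsum) hgeo
    _ = 1 + u + u ^ 2 / (2 * (1 - c)) := by
        rw [tsum_mul_left, tsum_geometric_of_lt_one hc0 hc]
        field_simp

lemma mgf_bound' {Ω : Type*} [MeasurableSpace Ω] {μ : Measure Ω} [IsProbabilityMeasure μ]
    (X : Ω → ℝ) (M : ℝ) (hmeas : Measurable X) (hbdd : ∀ᵐ ω ∂μ, |X ω| ≤ M)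
    (hcent : ∫ ω, X ω ∂μ = 0) {t : ℝ} (ht : 0 ≤ t) (htM : t * M < 1) :
    mgf X μ t ≤ Real.exp (variance X μ * t ^ 2 / (2 * (1 - t * M))) := by
  have hmem : MeasureTheory.MemLp X 2 μ := by
    refine (memLp_top_of_bound hmeas.aestronglyMeasurable M ?_).mono_exponent le_top
    exact hbdd.mono fun ω h => by rwa [Real.norm_eq_abs]
  have hintX : Integrable X μ := hmem.integrable one_le_two
  have hintX2 : Integrable (fun ω => X ω ^ 2) μ := by
    have := hmem.integrable_sq
    simpa [Pi.pow_apply] using this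
  have hvar : variance X μ = ∫ ω, X ω ^ 2 ∂μ := by
    rw [variance_eq_sub hmem, hcent]
    simp [Pi.pow_apply]
  have hae : ∀ᵐ ω ∂μ, Real.exp (t * X ω) ≤
      1 + t * X ω + X ω ^ 2 * (t ^ 2 / (2 * (1 - t * M))) := by
    filter_upwards [hbdd] with ω hω
    have habs : |t * X ω| ≤ t * M := by
      rw [abs_mul, abs_of_nonneg ht]
      exact mul_le_mul_of_nonneg_left hω ht
    have := pointwise_bound' habs htM
    calc Real.exp (t * X ω) ≤ 1 + t * X ω + (t * X ω) ^ 2 / (2 * (1 - t * M)) := this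
      _ = 1 + t * X ω + X ω ^ 2 * (t ^ 2 / (2 * (1 - t * M))) := by ring
  have hintExp : Integrable (fun ω => Real.exp (t * X ω)) μ := by
    refine Integrable.mono' (integrable_const (Real.exp (t * M)))
      ((hmeas.const_mul t).exp.aestronglyMeasurable) ?_
    filter_upwards [hbdd] with ω hω
    rw [Real.norm_eq_abs, abs_of_pos (Real.exp_pos _), Real.exp_le_exp]
    calc t * X ω ≤ t * |X ω| := mul_le_mul_of_nonneg_left (le_abs_self _) ht
      _ ≤ t * M := mul_le_mul_of_nonneg_left hω ht
  have hA : Integrable (fun ω => 1 + t * X ω) μ := (integrable_const 1).add (hintX.const_mul t)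
  have hB : Integrable (fun ω => X ω ^ 2 * (t ^ 2 / (2 * (1 - t * M)))) μ := hintX2.mul_const _
  have hC : Integrable (fun ω => t * X ω) μ := hintX.const_mul t
  have hintRHS : Integrable (fun ω => 1 + t * X ω + X ω ^ 2 * (t ^ 2 / (2 * (1 - t * M)))) μ :=
    hA.add hB
  calc mgf X μ t = ∫ ω, Real.exp (t * X ω) ∂μ := rfl
    _ ≤ ∫ ω, (1 + t * X ω + X ω ^ 2 * (t ^ 2 / (2 * (1 - t * M)))) ∂μ :=
        integral_mono_ae hintExp hintRHS hae
    _ = 1 + variance X μ * t ^ 2 / (2 * (1 - t * M)) := by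
        rw [integral_add hA hB, integral_add (integrable_const 1) hC,
          integral_const, integral_const_mul, integral_mul_const, hcent, hvar]
        simp
        ring
    _ ≤ Real.exp (variance X μ * t ^ 2 / (2 * (1 - t * M))) := by
        rw [add_comm]
        exact Real.add_one_le_exp _


lemma bern_ae_zero_of_var_zero {Ω : Type*} [MeasurableSpace Ω] {μ : Measure Ω}
    [IsProbabilityMeasure μ] (X : Ω → ℝ) (M : ℝ) (hmeas : Measurable X)
    (hbdd : ∀ᵐ ω ∂μ, |X ω| ≤ M) (hcent : ∫ ω, X ω ∂μ = 0) (hv : variance X μ = 0) :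
    ∀ᵐ ω ∂μ, X ω = 0 := by
  have hmem : MeasureTheory.MemLp X 2 μ := by
    refine (memLp_top_of_bound hmeas.aestronglyMeasurable M ?_).mono_exponent le_top
    exact hbdd.mono fun ω h => by rwa [Real.norm_eq_abs]
  have hvar : variance X μ = ∫ ω, X ω ^ 2 ∂μ := by
    rw [variance_eq_sub hmem, hcent]
    simp [Pi.pow_apply]
  have hint2 : Integrable (fun ω => X ω ^ 2) μ := by
    have := hmem.integrable_sq
    simpa [Pi.pow_apply] using this
  have h0 : ∫ ω, X ω ^ 2 ∂μ = 0 := by rw [← hvar, hv]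
  have := (integral_eq_zero_iff_of_nonneg (fun ω => sq_nonneg (X ω)) hint2).mp h0
  filter_upwards [this] with ω hω
  exact pow_eq_zero_iff (by norm_num) |>.mp hω

theorem stmt3 {Ω : Type*} [MeasurableSpace Ω] {μ : Measure Ω} [IsProbabilityMeasure μ]
    (n : ℕ) (X : ℕ → Ω → ℝ) (M : ℝ) (hM : 0 < M)
    (hmeas : ∀ i, Measurable (X i))
    (hindep : iIndepFun X μ)
    (hbdd : ∀ i, ∀ᵐ ω ∂μ, |X i ω| ≤ M)
    (hcent : ∀ i, ∫ ω, X i ω ∂μ = 0) :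
    ∀ y : ℝ, 0 < y →
      μ {ω | y ≤ ∑ i ∈ range n, X i ω}
        ≤ ENNReal.ofReal
            (exp (-(y ^ 2) / (2 * (∑ i ∈ range n, variance (X i) μ) + 2 * y * M))) := by
  intro y hy
  set V := ∑ i ∈ range n, variance (X i) μ with hVdef
  have hvnn : ∀ i, 0 ≤ variance (X i) μ := fun i => variance_nonneg _ _
  have hVnn : 0 ≤ V := Finset.sum_nonneg fun i _ => hvnn i
  rcases eq_or_lt_of_le hVnn with hV0 | hVpos
  · -- degenerate case: all variances zero
    have hz : ∀ i ∈ range n, ∀ᵐ ω ∂μ, X i ω = 0 := by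
      intro i hi
      have hvi : variance (X i) μ = 0 :=
        (Finset.sum_eq_zero_iff_of_nonneg (fun j _ => hvnn j)).mp hV0.symm i hi
      exact bern_ae_zero_of_var_zero (X i) M (hmeas i) (hbdd i) (hcent i) hvi
    have hsum0 : ∀ᵐ ω ∂μ, ∑ i ∈ range n, X i ω = 0 := by
      have hall : ∀ᵐ ω ∂μ, ∀ i ∈ range n, X i ω = 0 :=
        (ae_ball_iff (Finset.countable_toSet (range n))).mpr hz
      filter_upwards [hall] with ω hω
      exact Finset.sum_eq_zero hω
    have hne : ∀ᵐ ω ∂μ, ¬ (y ≤ ∑ i ∈ range n, X i ω) := by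
      filter_upwards [hsum0] with ω hω
      rw [hω]; exact not_le.mpr hy
    have hzero : μ {ω | y ≤ ∑ i ∈ range n, X i ω} = 0 := by
      have := ae_iff.mp hne
      simpa only [not_not] using this
    rw [hzero]; exact zero_le
  · set t := y / (V + y * M) with htdef
    have hden : 0 < V + y * M := by positivity
    have ht0 : 0 < t := div_pos hy hden
    have htM : t * M < 1 := by
      rw [htdef, div_mul_eq_mul_div, div_lt_one hden]
      nlinarith
    have hint : ∀ i ∈ range n, Integrable (fun ω => exp (t * X i ω)) μ := by
      intro i _
      refine Integrable.mono' (integrable_const (exp (t * M)))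
        ((hmeas i).const_mul t).exp.aestronglyMeasurable ?_
      filter_upwards [hbdd i] with ω hω
      rw [Real.norm_eq_abs, abs_of_pos (exp_pos _), exp_le_exp]
      calc t * X i ω ≤ t * |X i ω| := mul_le_mul_of_nonneg_left (le_abs_self _) ht0.le
        _ ≤ t * M := mul_le_mul_of_nonneg_left hω ht0.le
    have hintS : Integrable (fun ω => exp (t * (∑ i ∈ range n, X i) ω)) μ :=
      hindep.integrable_exp_mul_sum hmeas hint
    have hcher := measure_ge_le_exp_mul_mgf (μ := μ) (X := ∑ i ∈ range n, X i) y ht0.le hintS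
    have hseteq : {ω | y ≤ (∑ i ∈ range n, X i) ω} = {ω | y ≤ ∑ i ∈ range n, X i ω} := by
      simp [Finset.sum_apply]
    rw [hseteq] at hcher
    have hmgf : mgf (∑ i ∈ range n, X i) μ t ≤ exp (V * t ^ 2 / (2 * (1 - t * M))) := by
      rw [hindep.mgf_sum hmeas]
      calc ∏ i ∈ range n, mgf (X i) μ t
          ≤ ∏ i ∈ range n, exp (variance (X i) μ * t ^ 2 / (2 * (1 - t * M))) :=
            Finset.prod_le_prod (fun i _ => mgf_nonneg)
              (fun i _ => mgf_bound' (X i) M (hmeas i) (hbdd i) (hcent i) ht0.le htM)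
        _ = exp (∑ i ∈ range n, variance (X i) μ * t ^ 2 / (2 * (1 - t * M))) :=
            (Real.exp_sum _ _).symm
        _ = exp (V * t ^ 2 / (2 * (1 - t * M))) := by
            rw [hVdef, ← Finset.sum_div, ← Finset.sum_mul]
    have hexp : exp (-t * y) * exp (V * t ^ 2 / (2 * (1 - t * M)))
        = exp (-(y ^ 2) / (2 * V + 2 * y * M)) := by
      rw [← exp_add]; congr 1
      have h1 : 1 - t * M = V / (V + y * M) := by
        rw [htdef]; field_simp; ring
      rw [htdef, h1]
      field_simp
      ring
    calc μ {ω | y ≤ ∑ i ∈ range n, X i ω}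
        = ENNReal.ofReal ((μ {ω | y ≤ ∑ i ∈ range n, X i ω}).toReal) :=
          (ENNReal.ofReal_toReal (measure_ne_top μ _)).symm
      _ ≤ ENNReal.ofReal (exp (-(y ^ 2) / (2 * V + 2 * y * M))) := by
          apply ENNReal.ofReal_le_ofReal
          calc (μ {ω | y ≤ ∑ i ∈ range n, X i ω}).toReal
              ≤ exp (-t * y) * mgf (∑ i ∈ range n, X i) μ t := hcher
            _ ≤ exp (-t * y) * exp (V * t ^ 2 / (2 * (1 - t * M))) := by
                exact mul_le_mul_of_nonneg_left hmgf (exp_pos _).le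
            _ = exp (-(y ^ 2) / (2 * V + 2 * y * M)) := hexp
end

section
/- The function g defined on the reals by g(x) = x⁻²(eˣ − x − 1) for x ≠ 0 and g(0) = 1/2 is increasing on ℝ. -/
open Real

-- The "numerator of the derivative" function h(x) = (x-2)eˣ + x + 2.
private lemma aux_hasDerivAt_h (x : ℝ) :
    HasDerivAt (fun x : ℝ => (x - 2) * exp x + x + 2) ((x - 1) * exp x + 1) x := by
  have h1 : HasDerivAt (fun x : ℝ => (x - 2) * exp x)
      (1 * exp x + (x - 2) * exp x) x :=
    (((hasDerivAt_id x).sub_const 2).mul (Real.hasDerivAt_exp x))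
  have h2 := (h1.add (hasDerivAt_id x)).add_const 2
  convert h2 using 1
  all_goals first | rfl | ring

private lemma aux_hderiv_pos {x : ℝ} (hx : x ≠ 0) : 0 < (x - 1) * exp x + 1 := by
  have h := Real.add_one_lt_exp (neg_ne_zero.mpr hx)
  have hex : 0 < exp x := exp_pos x
  have : exp (-x) * exp x = 1 := by
    rw [← Real.exp_add]; simp
  nlinarith [h, hex]

private lemma aux_h_neg {x : ℝ} (hx : x < 0) : (x - 2) * exp x + x + 2 < 0 := by
  have hmono : StrictMonoOn (fun x : ℝ => (x - 2) * exp x + x + 2) (Set.Iic 0) := by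
    apply strictMonoOn_of_deriv_pos (convex_Iic 0)
    · exact Continuous.continuousOn (by continuity)
    · intro y hy
      rw [interior_Iic] at hy
      rw [(aux_hasDerivAt_h y).deriv]
      exact aux_hderiv_pos (ne_of_lt hy)
  have := hmono (Set.mem_Iic.mpr hx.le) (Set.mem_Iic.mpr le_rfl) hx
  simpa using this

private lemma aux_h_pos {x : ℝ} (hx : 0 < x) : 0 < (x - 2) * exp x + x + 2 := by
  have hmono : StrictMonoOn (fun x : ℝ => (x - 2) * exp x + x + 2) (Set.Ici 0) := by
    apply strictMonoOn_of_deriv_pos (convex_Ici 0)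
    · exact Continuous.continuousOn (by continuity)
    · intro y hy
      rw [interior_Ici] at hy
      rw [(aux_hasDerivAt_h y).deriv]
      exact aux_hderiv_pos (ne_of_gt hy)
  have := hmono (Set.mem_Ici.mpr le_rfl) (Set.mem_Ici.mpr hx.le) hx
  simpa using this

private lemma aux_hasDerivAt_F (x : ℝ) :
    HasDerivAt (fun x : ℝ => exp x - 1 - x - x ^ 2 / 2) (exp x - 1 - x) x := by
  have h1 : HasDerivAt (fun x : ℝ => exp x - 1 - x) (exp x - 1) x :=
    ((Real.hasDerivAt_exp x).sub_const 1).sub (hasDerivAt_id' x)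
  have h2 : HasDerivAt (fun x : ℝ => x ^ 2 / 2) (2 * x ^ 1 * 1 / 2) x :=
    ((hasDerivAt_id x).pow 2).div_const 2
  convert h1.sub h2 using 1
  all_goals first | rfl | ring

private lemma aux_Fderiv_pos {x : ℝ} (hx : x ≠ 0) : 0 < exp x - 1 - x := by
  have := Real.add_one_lt_exp hx
  linarith

private lemma aux_quad_lt {x : ℝ} (hx : x < 0) : exp x < 1 + x + x ^ 2 / 2 := by
  have hmono : StrictMonoOn (fun x : ℝ => exp x - 1 - x - x ^ 2 / 2) (Set.Iic 0) := by
    apply strictMonoOn_of_deriv_pos (convex_Iic 0)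
    · exact Continuous.continuousOn (by continuity)
    · intro y hy
      rw [interior_Iic] at hy
      rw [(aux_hasDerivAt_F y).deriv]
      exact aux_Fderiv_pos (ne_of_lt hy)
  have := hmono (Set.mem_Iic.mpr hx.le) (Set.mem_Iic.mpr le_rfl) hx
  simp only [Real.exp_zero] at this
  nlinarith [this]

private lemma aux_quad_gt {x : ℝ} (hx : 0 < x) : 1 + x + x ^ 2 / 2 < exp x := by
  have hmono : StrictMonoOn (fun x : ℝ => exp x - 1 - x - x ^ 2 / 2) (Set.Ici 0) := by
    apply strictMonoOn_of_deriv_pos (convex_Ici 0)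
    · exact Continuous.continuousOn (by continuity)
    · intro y hy
      rw [interior_Ici] at hy
      rw [(aux_hasDerivAt_F y).deriv]
      exact aux_Fderiv_pos (ne_of_gt hy)
  have := hmono (Set.mem_Ici.mpr le_rfl) (Set.mem_Ici.mpr hx.le) hx
  simp only [Real.exp_zero] at this
  nlinarith [this]

private lemma aux_hasDerivAt_g {x : ℝ} (hx : x ≠ 0) :
    HasDerivAt (fun x : ℝ => x⁻¹ ^ 2 * (exp x - x - 1))
      (x⁻¹ ^ 3 * ((x - 2) * exp x + x + 2)) x := by
  have h1 : HasDerivAt (fun x : ℝ => x⁻¹ ^ 2) (2 * x⁻¹ ^ 1 * (-(x ^ 2)⁻¹)) x :=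
    (hasDerivAt_inv hx).pow 2
  have h2 : HasDerivAt (fun x : ℝ => exp x - x - 1) (exp x - 1) x :=
    ((Real.hasDerivAt_exp x).sub (hasDerivAt_id' x)).sub_const 1
  have h3 := h1.mul h2
  convert h3 using 1
  all_goals first | rfl | (field_simp; ring)

private lemma aux_gmono_neg :
    StrictMonoOn (fun x : ℝ => x⁻¹ ^ 2 * (exp x - x - 1)) (Set.Iio 0) := by
  apply strictMonoOn_of_deriv_pos (convex_Iio 0)
  · apply ContinuousOn.mul
    · exact (ContinuousOn.inv₀ continuousOn_id fun y hy => ne_of_lt hy).pow 2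
    · exact Continuous.continuousOn (by continuity)
  · intro y hy
    rw [interior_Iio] at hy
    have hy0 : y ≠ 0 := ne_of_lt hy
    rw [(aux_hasDerivAt_g hy0).deriv]
    have h1 : (y : ℝ)⁻¹ ^ 3 < 0 :=
      Odd.pow_neg ⟨1, by norm_num⟩ (inv_lt_zero.mpr hy)
    have h2 := aux_h_neg hy
    exact mul_pos_of_neg_of_neg h1 h2

private lemma aux_gmono_pos :
    StrictMonoOn (fun x : ℝ => x⁻¹ ^ 2 * (exp x - x - 1)) (Set.Ioi 0) := by
  apply strictMonoOn_of_deriv_pos (convex_Ioi 0)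
  · apply ContinuousOn.mul
    · exact (ContinuousOn.inv₀ continuousOn_id fun y hy => ne_of_gt hy).pow 2
    · exact Continuous.continuousOn (by continuity)
  · intro y hy
    rw [interior_Ioi] at hy
    have hy0 : y ≠ 0 := ne_of_gt hy
    rw [(aux_hasDerivAt_g hy0).deriv]
    have h1 : 0 < (y : ℝ)⁻¹ ^ 3 := pow_pos (inv_pos.mpr hy) 3
    exact mul_pos h1 (aux_h_pos hy)

private lemma aux_g_lt_half {x : ℝ} (hx : x < 0) :
    x⁻¹ ^ 2 * (exp x - x - 1) < 1 / 2 := by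
  have h := aux_quad_lt hx
  have hx2 : (0 : ℝ) < x ^ 2 := pow_two_pos_of_ne_zero (ne_of_lt hx)
  have hinv : x⁻¹ ^ 2 * x ^ 2 = 1 := by
    field_simp [ne_of_lt hx]
  have hinvpos : (0 : ℝ) < x⁻¹ ^ 2 := pow_two_pos_of_ne_zero (inv_ne_zero (ne_of_lt hx))
  nlinarith [h, hinv, hinvpos]

private lemma aux_g_gt_half {x : ℝ} (hx : 0 < x) :
    1 / 2 < x⁻¹ ^ 2 * (exp x - x - 1) := by
  have h := aux_quad_gt hx
  have hinv : x⁻¹ ^ 2 * x ^ 2 = 1 := by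
    field_simp
  have hinvpos : (0 : ℝ) < x⁻¹ ^ 2 := pow_two_pos_of_ne_zero (inv_ne_zero (ne_of_gt hx))
  nlinarith [h, hinv, hinvpos]

theorem stmt4 :
    StrictMono (fun x : ℝ => if x = 0 then 1 / 2 else x⁻¹ ^ 2 * (exp x - x - 1)) := by
  intro x y hxy
  simp only
  rcases lt_trichotomy x 0 with hx | hx | hx
  · rw [if_neg (ne_of_lt hx)]
    rcases lt_trichotomy y 0 with hy | hy | hy
    · rw [if_neg (ne_of_lt hy)]
      exact aux_gmono_neg hx hy hxy
    · rw [if_pos hy]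
      exact aux_g_lt_half hx
    · rw [if_neg (ne_of_gt hy)]
      exact (aux_g_lt_half hx).trans (aux_g_gt_half hy)
  · subst hx
    rw [if_pos rfl, if_neg (ne_of_gt hxy)]
    exact aux_g_gt_half hxy
  · rw [if_neg (ne_of_gt hx), if_neg (ne_of_gt (hx.trans hxy))]
    exact aux_gmono_pos hx (hx.trans hxy) hxy
end

section
/- Let Y_1, …, Y_p be real-valued random variables each almost surely bounded in absolute value by M. For i ≥ 2, let Y_i* be a random variable independent of σ(Y_1, …, Y_{i−1}) with the same distribution as Y_i. Then for any real t, |E[exp(t Σ_{i=1}^p Y_i)] − Π_{i=1}^p E[exp(t Y_i)]| ≤ |t| exp(|t| M p) Σ_{i=2}^p E|Y_i − Y_i*|. -/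
open MeasureTheory ProbabilityTheory Real Finset

lemma myExpDiff {x y C : ℝ} (hx : |x| ≤ C) (hy : |y| ≤ C) :
    |Real.exp x - Real.exp y| ≤ |x - y| * Real.exp C := by
  wlog h : y ≤ x generalizing x y
  · rw [abs_sub_comm, abs_sub_comm x y]; exact this hy hx (le_of_not_ge h)
  have hxy : Real.exp y ≤ Real.exp x := Real.exp_le_exp.2 h
  rw [abs_of_nonneg (sub_nonneg.2 hxy), abs_of_nonneg (sub_nonneg.2 h)]
  have h1 : Real.exp y = Real.exp x * Real.exp (y - x) := by
    rw [← Real.exp_add]; ring_nf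
  have h2 := Real.add_one_le_exp (y - x)
  have h3 : Real.exp x ≤ Real.exp C := Real.exp_le_exp.2 (le_trans (le_abs_self x) hx)
  nlinarith [Real.exp_pos x, sub_nonneg.2 h]

lemma myTele (f : ℕ → ℝ) : ∀ p, 1 ≤ p → f p - f 1 = ∑ k ∈ Icc 2 p, (f k - f (k-1)) := by
  intro p hp
  induction p with
  | zero => omega
  | succ n ih =>
    rcases Nat.lt_or_ge n 1 with hn | hn
    · interval_cases n
      · simp
    · rw [Finset.sum_Icc_succ_top (by omega : 2 ≤ n+1), ← ih hn]
      simp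

lemma myIntExp {Ω : Type*} [MeasurableSpace Ω] {μ : Measure Ω}
    [IsProbabilityMeasure μ] {X : Ω → ℝ} (hX : Measurable X) {C : ℝ}
    (h : ∀ᵐ ω ∂μ, |X ω| ≤ C) (t : ℝ) :
    Integrable (fun ω => Real.exp (t * X ω)) μ := by
  refine Integrable.mono' (integrable_const (Real.exp (|t| * C)))
    ((Real.measurable_exp.comp (hX.const_mul t)).aestronglyMeasurable) ?_
  filter_upwards [h] with ω hω
  rw [Real.norm_eq_abs, abs_of_pos (Real.exp_pos _)]
  refine Real.exp_le_exp.2 (le_trans (le_abs_self _) ?_)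
  rw [abs_mul]
  exact mul_le_mul_of_nonneg_left hω (abs_nonneg t)

theorem stmt14 {Ω : Type*} [MeasurableSpace Ω] {μ : Measure Ω} [IsProbabilityMeasure μ]
    (p : ℕ) (Y Ystar : ℕ → Ω → ℝ) (M : ℝ) (hM : 0 < M)
    (hmeas : ∀ i, Measurable (Y i)) (hmeas' : ∀ i, Measurable (Ystar i))
    (hbd : ∀ i ∈ Icc 1 p, ∀ᵐ ω ∂μ, |Y i ω| ≤ M)
    (hdist : ∀ i ∈ Icc 2 p, Measure.map (Ystar i) μ = Measure.map (Y i) μ)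
    (hindep : ∀ i ∈ Icc 2 p,
      Indep (⨆ j ∈ Icc 1 (i - 1), MeasurableSpace.comap (Y j) inferInstance)
        (MeasurableSpace.comap (Ystar i) inferInstance) μ)
    (t : ℝ) :
    |(∫ ω, exp (t * ∑ i ∈ Icc 1 p, Y i ω) ∂μ) -
        ∏ i ∈ Icc 1 p, ∫ ω, exp (t * Y i ω) ∂μ|
      ≤ |t| * exp (|t| * M * p) * ∑ i ∈ Icc 2 p, ∫ ω, |Y i ω - Ystar i ω| ∂μ := by
  rcases Nat.eq_zero_or_pos p with hp | hp
  · subst hp; simp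
  -- notation
  set S : ℕ → Ω → ℝ := fun n ω => ∑ i ∈ Icc 1 n, Y i ω with hSdef
  set E : ℕ → ℝ := fun i => ∫ ω, exp (t * Y i ω) ∂μ with hEdef
  set A : ℕ → ℝ := fun k => (∫ ω, exp (t * S k ω) ∂μ) * ∏ i ∈ Icc (k+1) p, E i with hAdef
  have hSmeas : ∀ n, Measurable (S n) := fun n => Finset.measurable_sum _ (fun i _ => hmeas i)
  -- a.e. bounds
  have habd : ∀ᵐ ω ∂μ, ∀ i ∈ Icc 1 p, |Y i ω| ≤ M := ((Icc 1 p).eventually_all).2 hbd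
  have hbd2 : ∀ i ∈ Icc 2 p, ∀ᵐ ω ∂μ, |Ystar i ω| ≤ M := by
    intro i hi
    simp only [Finset.mem_Icc] at hi
    have hmem : i ∈ Icc 1 p := by simp only [Finset.mem_Icc]; omega
    have hms : MeasurableSet {x : ℝ | |x| ≤ M} :=
      measurableSet_le (measurable_abs) measurable_const
    have h1 := (ae_map_iff (hmeas i).aemeasurable hms).2 (hbd i hmem)
    rw [← hdist i (by simp only [Finset.mem_Icc]; omega)] at h1
    exact (ae_map_iff (hmeas' i).aemeasurable hms).1 h1
  have hSbd : ∀ n, n ≤ p → ∀ᵐ ω ∂μ, |S n ω| ≤ n * M := by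
    intro n hn
    filter_upwards [habd] with ω hω
    calc |∑ i ∈ Icc 1 n, Y i ω| ≤ ∑ i ∈ Icc 1 n, |Y i ω| := Finset.abs_sum_le_sum_abs _ _
      _ ≤ ∑ _i ∈ Icc 1 n, M := Finset.sum_le_sum (fun i hi => by
          refine hω i ?_
          simp only [Finset.mem_Icc] at hi ⊢; omega)
      _ = n * M := by rw [Finset.sum_const, Nat.card_Icc]; simp [nsmul_eq_mul]
  -- integrability
  have hEint : ∀ i ∈ Icc 1 p, Integrable (fun ω => exp (t * Y i ω)) μ :=
    fun i hi => myIntExp (hmeas i) (hbd i hi) t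
  have hSint : ∀ n, n ≤ p → Integrable (fun ω => exp (t * S n ω)) μ :=
    fun n hn => myIntExp (hSmeas n) (hSbd n hn) t
  -- bound on E i
  have hEbd : ∀ i ∈ Icc 1 p, |E i| ≤ exp (|t| * M) := by
    intro i hi
    calc |E i| ≤ ∫ ω, |exp (t * Y i ω)| ∂μ := by
          simpa [Real.norm_eq_abs] using
            norm_integral_le_integral_norm (fun ω => exp (t * Y i ω)) (μ := μ)
      _ ≤ ∫ _ω, exp (|t| * M) ∂μ := by
          refine integral_mono_ae (hEint i hi).abs (integrable_const _) ?_
          filter_upwards [hbd i hi] with ω hω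
          rw [abs_of_pos (Real.exp_pos _)]
          refine Real.exp_le_exp.2 (le_trans (le_abs_self _) ?_)
          rw [abs_mul]
          exact mul_le_mul_of_nonneg_left hω (abs_nonneg t)
      _ = exp (|t| * M) := by simp
  -- bound on products of E
  have hPbd : ∀ k, 1 ≤ k → k ≤ p → |∏ i ∈ Icc (k+1) p, E i| ≤ exp (|t| * M * (p - k : ℕ)) := by
    intro k hk1 hkp
    rw [Finset.abs_prod]
    calc ∏ i ∈ Icc (k+1) p, |E i| ≤ ∏ _i ∈ Icc (k+1) p, exp (|t| * M) := by
          refine Finset.prod_le_prod (fun i _ => abs_nonneg _) (fun i hi => ?_)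
          refine hEbd i ?_
          simp only [Finset.mem_Icc] at hi ⊢; omega
      _ = exp (|t| * M) ^ (p - k) := by
          rw [Finset.prod_const, Nat.card_Icc]
          congr 1
          omega
      _ = exp (|t| * M * (p - k : ℕ)) := by rw [mul_comm (|t| * M), Real.exp_nat_mul]
  -- independence as IndepFun
  have hIF : ∀ k ∈ Icc 2 p, IndepFun (S (k-1)) (Ystar k) μ := by
    intro k hk
    have h1 : MeasurableSpace.comap (S (k-1)) inferInstance ≤
        ⨆ j ∈ Icc 1 (k-1), MeasurableSpace.comap (Y j) inferInstance := by
      refine Measurable.comap_le ?_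
      refine Finset.measurable_sum _ (fun j hj => ?_)
      exact Measurable.of_comap_le
        (le_iSup₂ (f := fun j (_ : j ∈ Icc 1 (k-1)) => MeasurableSpace.comap (Y j) (inferInstance : MeasurableSpace ℝ)) j hj)
    exact Kernel.indep_of_indep_of_le_left (hindep k hk) h1
  -- main step bound
  have hstep : ∀ k ∈ Icc 2 p, |A k - A (k-1)| ≤
      |t| * exp (|t| * M * p) * ∫ ω, |Y k ω - Ystar k ω| ∂μ := by
    intro k hk
    have hk' := hk
    simp only [Finset.mem_Icc] at hk'
    obtain ⟨hk2, hkp⟩ := hk'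
    have hk1p : k - 1 ≤ p := by omega
    have hkmem : k ∈ Icc 1 p := by simp only [Finset.mem_Icc]; omega
    have intS := hSint (k-1) hk1p
    have intYk := hEint k hkmem
    have intYs : Integrable (fun ω => exp (t * Ystar k ω)) μ :=
      myIntExp (hmeas' k) (hbd2 k hk) t
    -- E k via Ystar
    have hEk : (∫ ω, exp (t * Ystar k ω) ∂μ) = E k := by
      have hsm : AEStronglyMeasurable (fun x : ℝ => exp (t * x)) (Measure.map (Ystar k) μ) :=
        (Real.measurable_exp.comp (measurable_const.mul measurable_id)).aestronglyMeasurable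
      have hsm2 : AEStronglyMeasurable (fun x : ℝ => exp (t * x)) (Measure.map (Y k) μ) :=
        (Real.measurable_exp.comp (measurable_const.mul measurable_id)).aestronglyMeasurable
      have h1 := integral_map (hmeas' k).aemeasurable hsm
      have h2 := integral_map (hmeas k).aemeasurable hsm2
      rw [hEdef, ← h1, hdist k hk, h2]
    have hSsplit : ∀ ω, S k ω = S (k-1) ω + Y k ω := by
      intro ω
      obtain ⟨m, rfl⟩ : ∃ m, k = m + 1 := ⟨k-1, by omega⟩
      simp only [hSdef, Nat.add_sub_cancel]
      rw [Finset.sum_Icc_succ_top (by omega : 1 ≤ m + 1)]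
    -- product integrabilities
    have intprod1 : Integrable (fun ω => exp (t * S (k-1) ω) * exp (t * Y k ω)) μ := by
      refine (hSint k hkp).congr (Filter.Eventually.of_forall fun ω => ?_)
      show exp (t * S k ω) = exp (t * S (k-1) ω) * exp (t * Y k ω)
      rw [hSsplit ω, mul_add, Real.exp_add]
    have intprod2 : Integrable (fun ω => exp (t * S (k-1) ω) * exp (t * Ystar k ω)) μ := by
      have h : Integrable (fun ω => exp (t * (S (k-1) ω + Ystar k ω))) μ := by
        refine myIntExp ((hSmeas (k-1)).add (hmeas' k)) (C := ((k-1 : ℕ) : ℝ) * M + M) ?_ t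
        filter_upwards [hSbd (k-1) hk1p, hbd2 k hk] with ω h1 h2
        exact (abs_add_le _ _).trans (add_le_add h1 h2)
      refine h.congr (Filter.Eventually.of_forall fun ω => ?_)
      show exp (t * (S (k-1) ω + Ystar k ω)) = exp (t * S (k-1) ω) * exp (t * Ystar k ω)
      rw [mul_add, Real.exp_add]
    -- independence gives product formula
    have hIFexp : IndepFun (fun ω => exp (t * S (k-1) ω)) (fun ω => exp (t * Ystar k ω)) μ :=
      (hIF k hk).comp (φ := fun x : ℝ => exp (t * x)) (ψ := fun x : ℝ => exp (t * x))
        (Real.measurable_exp.comp (measurable_const.mul measurable_id))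
        (Real.measurable_exp.comp (measurable_const.mul measurable_id))
    have hmul : (∫ ω, exp (t * S (k-1) ω) * exp (t * Ystar k ω) ∂μ)
        = (∫ ω, exp (t * S (k-1) ω) ∂μ) * ∫ ω, exp (t * Ystar k ω) ∂μ :=
      hIFexp.integral_fun_mul_eq_mul_integral intS.aestronglyMeasurable intYs.aestronglyMeasurable
    -- key identity
    have hkey : (∫ ω, exp (t * S k ω) ∂μ) - (∫ ω, exp (t * S (k-1) ω) ∂μ) * E k
        = ∫ ω, exp (t * S (k-1) ω) * (exp (t * Y k ω) - exp (t * Ystar k ω)) ∂μ := by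
      have e1 : (∫ ω, exp (t * S k ω) ∂μ)
          = ∫ ω, exp (t * S (k-1) ω) * exp (t * Y k ω) ∂μ := by
        refine integral_congr_ae (Filter.Eventually.of_forall fun ω => ?_)
        show exp (t * S k ω) = exp (t * S (k-1) ω) * exp (t * Y k ω)
        rw [hSsplit ω, mul_add, Real.exp_add]
      rw [e1, ← hEk, ← hmul, ← integral_sub intprod1 intprod2]
      refine integral_congr_ae (Filter.Eventually.of_forall fun ω => ?_)
      show exp (t * S (k-1) ω) * exp (t * Y k ω) - exp (t * S (k-1) ω) * exp (t * Ystar k ω)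
        = exp (t * S (k-1) ω) * (exp (t * Y k ω) - exp (t * Ystar k ω))
      ring
    -- integrability of |Y k - Ystar k|
    have hdiffint : Integrable (fun ω => |Y k ω - Ystar k ω|) μ := by
      refine Integrable.mono' (integrable_const (2 * M))
        (((hmeas k).sub (hmeas' k)).abs.aestronglyMeasurable) ?_
      filter_upwards [hbd k hkmem, hbd2 k hk] with ω h1 h2
      rw [Real.norm_eq_abs, abs_abs]
      calc |Y k ω - Ystar k ω| ≤ |Y k ω| + |Ystar k ω| := abs_sub _ _
        _ ≤ 2 * M := by linarith
    -- pointwise bound on the integral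
    have hb1 : |∫ ω, exp (t * S (k-1) ω) * (exp (t * Y k ω) - exp (t * Ystar k ω)) ∂μ|
        ≤ (exp (|t| * M * ((k-1 : ℕ) : ℝ)) * (|t| * exp (|t| * M)))
            * ∫ ω, |Y k ω - Ystar k ω| ∂μ := by
      have hint : Integrable
          (fun ω => (exp (|t| * M * ((k-1 : ℕ) : ℝ)) * (|t| * exp (|t| * M)))
            * |Y k ω - Ystar k ω|) μ := hdiffint.const_mul _
      have hae : ∀ᵐ ω ∂μ, ‖exp (t * S (k-1) ω) * (exp (t * Y k ω) - exp (t * Ystar k ω))‖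
          ≤ (exp (|t| * M * ((k-1 : ℕ) : ℝ)) * (|t| * exp (|t| * M))) * |Y k ω - Ystar k ω| := by
        filter_upwards [hSbd (k-1) hk1p, hbd k hkmem, hbd2 k hk] with ω h1 h2 h3
        rw [Real.norm_eq_abs, abs_mul]
        have e1 : |exp (t * S (k-1) ω)| ≤ exp (|t| * M * ((k-1 : ℕ) : ℝ)) := by
          rw [abs_of_pos (Real.exp_pos _)]
          refine Real.exp_le_exp.2 (le_trans (le_abs_self _) ?_)
          rw [abs_mul]
          calc |t| * |S (k-1) ω| ≤ |t| * (((k-1 : ℕ) : ℝ) * M) :=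
                mul_le_mul_of_nonneg_left h1 (abs_nonneg t)
            _ = |t| * M * ((k-1 : ℕ) : ℝ) := by ring
        have hx : |t * Y k ω| ≤ |t| * M := by
          rw [abs_mul]; exact mul_le_mul_of_nonneg_left h2 (abs_nonneg t)
        have hy : |t * Ystar k ω| ≤ |t| * M := by
          rw [abs_mul]; exact mul_le_mul_of_nonneg_left h3 (abs_nonneg t)
        have e2 := myExpDiff hx hy
        have e3 : |t * Y k ω - t * Ystar k ω| = |t| * |Y k ω - Ystar k ω| := by
          rw [← mul_sub, abs_mul]
        rw [e3] at e2
        calc |exp (t * S (k-1) ω)| * |exp (t * Y k ω) - exp (t * Ystar k ω)|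
            ≤ exp (|t| * M * ((k-1 : ℕ) : ℝ)) * (|t| * |Y k ω - Ystar k ω| * exp (|t| * M)) :=
              mul_le_mul e1 e2 (abs_nonneg _) (Real.exp_pos _).le
          _ = (exp (|t| * M * ((k-1 : ℕ) : ℝ)) * (|t| * exp (|t| * M))) * |Y k ω - Ystar k ω| := by
              ring
      have hni := norm_integral_le_of_norm_le hint hae
      rw [Real.norm_eq_abs] at hni
      rwa [integral_const_mul] at hni
    -- assemble
    have hsplitP : ∏ i ∈ Icc k p, E i = E k * ∏ i ∈ Icc (k+1) p, E i := by
      rw [Finset.Icc_eq_cons_Ioc (by omega : k ≤ p), Finset.prod_cons, ← Finset.Icc_add_one_left_eq_Ioc]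
    have hAdiff : A k - A (k-1) = (∏ i ∈ Icc (k+1) p, E i)
        * ((∫ ω, exp (t * S k ω) ∂μ) - (∫ ω, exp (t * S (k-1) ω) ∂μ) * E k) := by
      have hkk : k - 1 + 1 = k := by omega
      simp only [hAdef, hkk, hsplitP]
      ring
    have hcast : exp (|t| * M * ((p - k : ℕ) : ℝ)) * exp (|t| * M * ((k-1 : ℕ) : ℝ))
        * exp (|t| * M) = exp (|t| * M * p) := by
      rw [← Real.exp_add, ← Real.exp_add]
      congr 1
      rw [Nat.cast_sub hkp, Nat.cast_sub (by omega : 1 ≤ k)]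
      push_cast
      ring
    calc |A k - A (k-1)|
        = |∏ i ∈ Icc (k+1) p, E i|
          * |(∫ ω, exp (t * S k ω) ∂μ) - (∫ ω, exp (t * S (k-1) ω) ∂μ) * E k| := by
          rw [hAdiff, abs_mul]
      _ ≤ exp (|t| * M * ((p - k : ℕ) : ℝ))
          * ((exp (|t| * M * ((k-1 : ℕ) : ℝ)) * (|t| * exp (|t| * M)))
            * ∫ ω, |Y k ω - Ystar k ω| ∂μ) := by
          refine mul_le_mul (hPbd k (by omega) hkp) ?_ (abs_nonneg _) (Real.exp_pos _).le
          rw [hkey]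
          exact hb1
      _ = (exp (|t| * M * ((p - k : ℕ) : ℝ)) * exp (|t| * M * ((k-1 : ℕ) : ℝ)) * exp (|t| * M))
          * (|t| * ∫ ω, |Y k ω - Ystar k ω| ∂μ) := by ring
      _ = |t| * exp (|t| * M * p) * ∫ ω, |Y k ω - Ystar k ω| ∂μ := by
          rw [hcast]; ring
  -- final assembly
  have hAp : A p = ∫ ω, exp (t * ∑ i ∈ Icc 1 p, Y i ω) ∂μ := by
    simp only [hAdef, hSdef]
    rw [Finset.Icc_eq_empty (by omega : ¬ p + 1 ≤ p)]
    simp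
  have hA1 : A 1 = ∏ i ∈ Icc 1 p, E i := by
    have h1 : (∫ ω, exp (t * S 1 ω) ∂μ) = E 1 := by
      simp only [hEdef, hSdef]
      congr 1
      funext ω
      rw [Finset.Icc_self, Finset.sum_singleton]
    simp only [hAdef, h1]
    rw [Finset.Icc_eq_cons_Ioc (by omega : 1 ≤ p), Finset.prod_cons, ← Finset.Icc_add_one_left_eq_Ioc]
  calc |(∫ ω, exp (t * ∑ i ∈ Icc 1 p, Y i ω) ∂μ) - ∏ i ∈ Icc 1 p, E i|
      = |A p - A 1| := by rw [hAp, hA1]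
    _ = |∑ k ∈ Icc 2 p, (A k - A (k-1))| := by rw [myTele A p hp]
    _ ≤ ∑ k ∈ Icc 2 p, |A k - A (k-1)| := Finset.abs_sum_le_sum_abs _ _
    _ ≤ ∑ k ∈ Icc 2 p, |t| * exp (|t| * M * p) * ∫ ω, |Y k ω - Ystar k ω| ∂μ :=
        Finset.sum_le_sum hstep
    _ = |t| * exp (|t| * M * p) * ∑ i ∈ Icc 2 p, ∫ ω, |Y i ω - Ystar i ω| ∂μ := by
        rw [← Finset.mul_sum]
end

section
/- Let (X_k)_{k∈ℤ} be real random variables with second moments such that Σ_{k>0} k |Cov(X_0, X_k)| < ∞, second order stationary (Cov(X_i, X_j) depends only on i−j), and set S_n = X_1 + ⋯ + X_n, σ_n² = Var(S_n). If σ_n² → ∞ as n → ∞, then σ_n²/n converges to a finite positive limit σ² = Var(X_0) + 2 Σ_{k>0} Cov(X_0, X_k). -/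
open MeasureTheory ProbabilityTheory Filter

private lemma l2_mul_integrable' {Ω : Type*} [MeasurableSpace Ω] {μ : Measure Ω}
    {f g : Ω → ℝ} (hf : MemLp f 2 μ) (hg : MemLp g 2 μ) :
    Integrable (fun ω => f ω * g ω) μ := by
  have h : MemLp (f • g) 1 μ := hg.smul hf
  exact memLp_one_iff_integrable.mp h

private lemma aux_analysis (a : ℕ → ℝ) (c0 : ℝ)
    (hs : Summable (fun j : ℕ => ((j : ℝ) + 1) * |a j|))
    (v : ℕ → ℝ) (h0 : v 0 = 0)
    (hrec : ∀ n, v (n + 1) = v n + (c0 + 2 * ∑ k ∈ Finset.range n, a k))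
    (hv : Tendsto v atTop atTop) :
    0 < c0 + 2 * ∑' k, a k ∧
      Tendsto (fun n : ℕ => v n / n) atTop (nhds (c0 + 2 * ∑' k, a k)) := by
  have hA : Summable (fun j : ℕ => |a j|) := by
    apply Summable.of_nonneg_of_le (fun j => abs_nonneg _) _ hs
    intro j
    exact le_mul_of_one_le_left (abs_nonneg _) (by linarith [Nat.cast_nonneg (α := ℝ) j])
  have ha : Summable a := hA.of_abs
  set T : ℝ := ∑' k, a k with hT
  set σ : ℝ := c0 + 2 * T with hσ
  set t : ℕ → ℝ := fun m => ∑ k ∈ Finset.range m, a k with ht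
  have hvsum : ∀ n, v n = ∑ m ∈ Finset.range n, (c0 + 2 * t m) := by
    intro n
    induction n with
    | zero => simpa using h0
    | succ n ih => rw [hrec n, Finset.sum_range_succ, ih]
  have htT : Tendsto t atTop (nhds T) := ha.hasSum.tendsto_sum_nat
  have hu : Tendsto (fun m => c0 + 2 * t m) atTop (nhds σ) :=
    tendsto_const_nhds.add (htT.const_mul 2)
  have hces := hu.cesaro
  have htend : Tendsto (fun n : ℕ => v n / n) atTop (nhds σ) := by
    refine hces.congr (fun n => ?_)
    rw [hvsum n, div_eq_inv_mul]
  refine ⟨?_, htend⟩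
  set B : ℝ := ∑' j : ℕ, ((j : ℝ) + 1) * |a j| with hB
  have hAs : ∀ n : ℕ, Summable (fun k : ℕ => |a (k + n)|) :=
    fun n => (summable_nat_add_iff n).2 hA
  have hS2 : ∀ n : ℕ, Summable (fun k : ℕ => ((k : ℝ) + (n : ℝ) + 1) * |a (k + n)|) := by
    intro n
    have := (summable_nat_add_iff (f := fun j : ℕ => ((j : ℝ) + 1) * |a j|) n).2 hs
    refine this.congr (fun k => ?_)
    push_cast
    ring
  have hS2' : ∀ n : ℕ, Summable (fun k : ℕ => ((k : ℝ) + 1) * |a (k + n)|) := by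
    intro n
    apply Summable.of_nonneg_of_le (fun k => by positivity) _ (hS2 n)
    intro k
    have h : ((k : ℝ) + 1) ≤ ((k : ℝ) + (n : ℝ) + 1) := by
      linarith [Nat.cast_nonneg (α := ℝ) n]
    exact mul_le_mul_of_nonneg_right h (abs_nonneg _)
  set ρ : ℕ → ℝ := fun m => ∑' k, |a (k + m)| with hρ
  have claim : ∀ n : ℕ, ∑ m ∈ Finset.range n, ρ m
      + ∑' k : ℕ, ((k : ℝ) + 1) * |a (k + n)| = B := by
    intro n
    induction n with
    | zero => simp [hB]
    | succ n ih =>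
      rw [Finset.sum_range_succ, ← ih]
      have hsplit : ∑' k : ℕ, ((k : ℝ) + 1) * |a (k + n)|
          = |a n| + ∑' k : ℕ, (((k : ℝ) + 1) + 1) * |a (k + 1 + n)| := by
        rw [Summable.tsum_eq_zero_add (hS2' n)]
        push_cast
        simp
      have hidx : ∀ k : ℕ, k + 1 + n = k + (n + 1) := fun k => by omega
      have hρn : ρ n = |a n| + ∑' k : ℕ, |a (k + (n + 1))| := by
        rw [hρ]
        simp only []
        rw [Summable.tsum_eq_zero_add (hAs n)]
        simp only [hidx, zero_add]
      have hadd : ∑' k : ℕ, (((k : ℝ) + 1) + 1) * |a (k + 1 + n)|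
          = (∑' k : ℕ, |a (k + (n + 1))|) + ∑' k : ℕ, ((k : ℝ) + 1) * |a (k + (n + 1))| := by
        simp only [hidx]
        rw [← Summable.tsum_add (hAs (n + 1)) (hS2' (n + 1))]
        congr 1
        funext k
        ring
      rw [hsplit, hρn, hadd]
      ring
  have hρle : ∀ n : ℕ, ∑ m ∈ Finset.range n, ρ m ≤ B := by
    intro n
    have h1 : 0 ≤ ∑' k : ℕ, ((k : ℝ) + 1) * |a (k + n)| :=
      tsum_nonneg (fun k => by positivity)
    linarith [claim n]
  have htail : ∀ m : ℕ, |t m - T| ≤ ρ m := by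
    intro m
    have h1 := Summable.sum_add_tsum_nat_add (f := a) m ha
    have h2 : t m - T = -(∑' k, a (k + m)) := by rw [ht, hT]; simp only []; linarith
    rw [h2, abs_neg]
    have h3 := norm_tsum_le_tsum_norm (f := fun k : ℕ => a (k + m))
      (by simpa [Real.norm_eq_abs] using hAs m)
    simpa [Real.norm_eq_abs, hρ] using h3
  by_contra hcon
  push_neg at hcon
  obtain ⟨n, hn⟩ := (hv.eventually_ge_atTop (2 * B + 1)).exists
  have e1 : v n = (n : ℝ) * c0 + 2 * ∑ m ∈ Finset.range n, t m := by
    rw [hvsum]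
    rw [Finset.sum_add_distrib, Finset.sum_const, Finset.card_range, Finset.mul_sum]
    simp [nsmul_eq_mul]
  have e2 : ∑ m ∈ Finset.range n, t m - (n : ℝ) * T ≤ B := by
    have h3 : ∑ m ∈ Finset.range n, (t m - T) ≤ ∑ m ∈ Finset.range n, ρ m :=
      Finset.sum_le_sum (fun m _ => (le_abs_self (t m - T)).trans (htail m))
    have h4 := hρle n
    have h5 : ∑ m ∈ Finset.range n, (t m - T) ≤ B := h3.trans h4
    simpa [Finset.sum_sub_distrib, Finset.sum_const, Finset.card_range, nsmul_eq_mul] using h5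
  have hns : (n : ℝ) * σ ≤ 0 := by
    have := mul_le_mul_of_nonneg_left hcon (Nat.cast_nonneg (α := ℝ) n)
    simpa using this
  have hns' : (n : ℝ) * σ = (n : ℝ) * c0 + 2 * ((n : ℝ) * T) := by rw [hσ]; ring
  linarith

theorem stmt18 {Ω : Type*} [MeasurableSpace Ω] {μ : Measure Ω} [IsProbabilityMeasure μ]
    (X : ℤ → Ω → ℝ) (hL2 : ∀ i, MemLp (X i) 2 μ)
    (cov : ℤ → ℤ → ℝ)
    (hcov : ∀ i j, cov i j =
      ∫ ω, (X i ω - ∫ ω', X i ω' ∂μ) * (X j ω - ∫ ω', X j ω' ∂μ) ∂μ)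
    (hstat : ∀ i k : ℤ, cov i (i + k) = cov 0 k)
    (hsumm : Summable (fun k : ℕ => ((k : ℝ) + 1) * |cov 0 ((k : ℤ) + 1)|))
    (hvar : Tendsto (fun n : ℕ =>
        variance (fun ω => ∑ i ∈ Finset.Icc 1 (n : ℤ), X i ω) μ) atTop atTop) :
    0 < cov 0 0 + 2 * ∑' k : ℕ, cov 0 ((k : ℤ) + 1) ∧
    Tendsto (fun n : ℕ =>
        variance (fun ω => ∑ i ∈ Finset.Icc 1 (n : ℤ), X i ω) μ / n)
      atTop (nhds (cov 0 0 + 2 * ∑' k : ℕ, cov 0 ((k : ℤ) + 1))) := by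
  set Y : ℤ → Ω → ℝ := fun i ω => X i ω - ∫ ω', X i ω' ∂μ with hYdef
  have hY2 : ∀ i, MemLp (Y i) 2 μ := fun i => (hL2 i).sub (memLp_const _)
  have hYint : ∀ i j, Integrable (fun ω => Y i ω * Y j ω) μ :=
    fun i j => l2_mul_integrable' (hY2 i) (hY2 j)
  have hcovY : ∀ i j, cov i j = ∫ ω, Y i ω * Y j ω ∂μ := hcov
  have hIcc : ∀ (n : ℕ) (g : ℤ → ℝ),
      ∑ i ∈ Finset.Icc (1 : ℤ) (n : ℤ), g i = ∑ k ∈ Finset.range n, g ((k : ℤ) + 1) := by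
    intro n g
    rw [show Finset.Icc (1 : ℤ) (n : ℤ)
        = Finset.map ⟨fun k : ℕ => (k : ℤ) + 1, fun a b h => by simpa using h⟩
          (Finset.range n) by
      ext x
      simp only [Finset.mem_map, Finset.mem_range, Finset.mem_Icc, Function.Embedding.coeFn_mk]
      constructor
      · rintro ⟨h1, h2⟩
        exact ⟨(x - 1).toNat, by omega, by show (((x - 1).toNat : ℕ) : ℤ) + 1 = x; omega⟩
      · rintro ⟨k, hk, rfl⟩
        show 1 ≤ (k : ℤ) + 1 ∧ (k : ℤ) + 1 ≤ (n : ℤ)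
        omega]
    rw [Finset.sum_map]
    rfl
  set Z : ℕ → Ω → ℝ := fun n ω => ∑ k ∈ Finset.range n, Y ((k : ℤ) + 1) ω with hZdef
  have hZ2 : ∀ n, MemLp (Z n) 2 μ :=
    fun n => memLp_finset_sum _ (fun i _ => hY2 _)
  have hVeq : ∀ n : ℕ, variance (fun ω => ∑ i ∈ Finset.Icc (1 : ℤ) (n : ℤ), X i ω) μ
      = ∫ ω, (Z n ω) ^ 2 ∂μ := by
    intro n
    have hfun : (fun ω => ∑ i ∈ Finset.Icc (1 : ℤ) (n : ℤ), X i ω)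
        = fun ω => ∑ k ∈ Finset.range n, X ((k : ℤ) + 1) ω := by
      funext ω; exact hIcc n (fun i => X i ω)
    rw [hfun]
    have hS2 : MemLp (fun ω => ∑ k ∈ Finset.range n, X ((k : ℤ) + 1) ω) 2 μ :=
      memLp_finset_sum _ (fun i _ => hL2 _)
    rw [variance_eq_integral hS2.aestronglyMeasurable.aemeasurable]
    have hmean : (∫ ω, (∑ k ∈ Finset.range n, X ((k : ℤ) + 1) ω) ∂μ)
        = ∑ k ∈ Finset.range n, ∫ ω, X ((k : ℤ) + 1) ω ∂μ :=
      integral_finset_sum _ (fun i _ => (hL2 _).integrable one_le_two)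
    congr 1
    funext ω
    simp only [Pi.pow_apply, Pi.sub_apply, hmean, hZdef, hYdef]
    rw [← Finset.sum_sub_distrib]
  -- the recurrence
  have hZrec : ∀ n : ℕ, ∫ ω, (Z (n + 1) ω) ^ 2 ∂μ
      = ∫ ω, (Z n ω) ^ 2 ∂μ
        + (cov 0 0 + 2 * ∑ k ∈ Finset.range n, cov 0 ((k : ℤ) + 1)) := by
    intro n
    have IZZ : Integrable (fun ω => Z n ω * Z n ω) μ :=
      l2_mul_integrable' (hZ2 n) (hZ2 n)
    have IZY : Integrable (fun ω => Z n ω * Y ((n : ℤ) + 1) ω) μ :=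
      l2_mul_integrable' (hZ2 n) (hY2 _)
    have IYY : Integrable (fun ω => Y ((n : ℤ) + 1) ω * Y ((n : ℤ) + 1) ω) μ :=
      hYint _ _
    have hptw : (fun ω => (Z (n + 1) ω) ^ 2)
        = fun ω => Z n ω * Z n ω
            + (2 * (Z n ω * Y ((n : ℤ) + 1) ω) + Y ((n : ℤ) + 1) ω * Y ((n : ℤ) + 1) ω) := by
      funext ω
      have : Z (n + 1) ω = Z n ω + Y ((n : ℤ) + 1) ω := by
        rw [hZdef]; simp only []; rw [Finset.sum_range_succ]
      rw [this]
      ring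
    have I2 : Integrable (fun ω => 2 * (Z n ω * Y ((n : ℤ) + 1) ω)) μ := IZY.const_mul 2
    have I4 : Integrable
        (fun ω => 2 * (Z n ω * Y ((n : ℤ) + 1) ω) + Y ((n : ℤ) + 1) ω * Y ((n : ℤ) + 1) ω) μ :=
      I2.add IYY
    rw [hptw, integral_add IZZ I4, integral_add I2 IYY, integral_const_mul]
    have hZY : ∫ ω, Z n ω * Y ((n : ℤ) + 1) ω ∂μ
        = ∑ k ∈ Finset.range n, cov 0 ((k : ℤ) + 1) := by
      have h1 : (fun ω => Z n ω * Y ((n : ℤ) + 1) ω)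
          = fun ω => ∑ k ∈ Finset.range n, Y ((k : ℤ) + 1) ω * Y ((n : ℤ) + 1) ω := by
        funext ω
        rw [hZdef]
        simp only []
        rw [Finset.sum_mul]
      rw [h1, integral_finset_sum _ (fun k _ => hYint _ _)]
      have h2 : ∀ k ∈ Finset.range n,
          ∫ ω, Y ((k : ℤ) + 1) ω * Y ((n : ℤ) + 1) ω ∂μ = cov 0 ((n : ℤ) - (k : ℤ)) := by
        intro k hk
        rw [← hcovY]
        have := hstat ((k : ℤ) + 1) ((n : ℤ) - (k : ℤ))
        rw [show (k : ℤ) + 1 + ((n : ℤ) - (k : ℤ)) = (n : ℤ) + 1 by ring] at this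
        exact this
      rw [Finset.sum_congr rfl h2]
      have h3 := Finset.sum_range_reflect (fun j : ℕ => cov 0 ((j : ℤ) + 1)) n
      rw [← h3]
      refine Finset.sum_congr rfl (fun k hk => ?_)
      have hkn : k < n := Finset.mem_range.mp hk
      congr 1
      omega
    have hYY : ∫ ω, Y ((n : ℤ) + 1) ω * Y ((n : ℤ) + 1) ω ∂μ = cov 0 0 := by
      rw [← hcovY]
      have := hstat ((n : ℤ) + 1) 0
      rw [add_zero] at this
      exact this
    have hZZ : ∫ ω, Z n ω * Z n ω ∂μ = ∫ ω, (Z n ω) ^ 2 ∂μ := by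
      congr 1; funext ω; ring
    rw [hZY, hYY, hZZ]
    ring
  have h0 : variance (fun ω => ∑ i ∈ Finset.Icc 1 ((0 : ℕ) : ℤ), X i ω) μ = 0 := by
    rw [hVeq 0]
    simp [hZdef]
  have hrec : ∀ n : ℕ,
      variance (fun ω => ∑ i ∈ Finset.Icc 1 (((n + 1 : ℕ)) : ℤ), X i ω) μ
      = variance (fun ω => ∑ i ∈ Finset.Icc 1 ((n : ℕ) : ℤ), X i ω) μ
        + (cov 0 0 + 2 * ∑ k ∈ Finset.range n, cov 0 ((k : ℤ) + 1)) := by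
    intro n
    rw [hVeq, hVeq]
    exact hZrec n
  exact aux_analysis (fun k : ℕ => cov 0 ((k : ℤ) + 1)) (cov 0 0) hsumm
    (fun n : ℕ => variance (fun ω => ∑ i ∈ Finset.Icc 1 (n : ℤ), X i ω) μ)
    h0 hrec hvar
end
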